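/- Let C be a 2-category and W a class of 1-morphisms satisfying (BF1)–(BF5). With f¹ = (A¹, w¹, f¹), f² = (A², w², f²) : A → B and fixed choice (E, p, q, ς) for the cospan (w¹, w²) as before, two triples satisfy (A³, t, φ) ∼ (A'³, t', φ') if and only if the quintuples (A³, p ∘ t, q ∘ t, ς ▷ t, φ) and (A'³, p ∘ t', q ∘ t', ς ▷ t', φ') are equivalent in Pronk's sense. Consequently, the map N sending the ∼-class [A³, t, φ] to the Pronk class [A³, p ∘ t, q ∘ t, ς ▷ t, φ] is a well-defined bijection from ∼-classes of triples to the set of 2-morphisms from f¹ to f² in the bicategory of fractions. -/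

import Mathlib

open CategoryTheory CategoryTheory.Bicategory

universe w v u


/-- Pronk's axioms (BF1)–(BF5) for a right bicalculus of fractions on a class `W`
of 1-morphisms of a bicategory. -/
structure PronkBF {B : Type u} [Bicategory.{w, v} B]
    (W : ∀ ⦃X Y : B⦄, (X ⟶ Y) → Prop) : Prop where
  bf1 : ∀ X : B, W (𝟙 X)
  bf2 : ∀ {X Y Z : B} (f : X ⟶ Y) (g : Y ⟶ Z), W f → W g → W (f ≫ g)
  bf3 : ∀ {X Y Z : B} (wm : X ⟶ Y) (f : Z ⟶ Y), W wm →
      ∃ (D : B) (w' : D ⟶ Z) (f' : D ⟶ X), W w' ∧ Nonempty (w' ≫ f ≅ f' ≫ wm)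
  bf4a : ∀ {X Y Z : B} (wm : Y ⟶ X) (f₁ f₂ : Z ⟶ Y) (α : f₁ ≫ wm ⟶ f₂ ≫ wm), W wm →
      ∃ (D : B) (vm : D ⟶ Z) (β : vm ≫ f₁ ⟶ vm ≫ f₂), W vm ∧
        vm ◁ α = (α_ vm f₁ wm).inv ≫ β ▷ wm ≫ (α_ vm f₂ wm).hom
  bf4b : ∀ {X Y Z : B} (wm : Y ⟶ X) (f₁ f₂ : Z ⟶ Y) (α : f₁ ≫ wm ⟶ f₂ ≫ wm), W wm → IsIso α →
      ∃ (D : B) (vm : D ⟶ Z) (β : vm ≫ f₁ ⟶ vm ≫ f₂), W vm ∧ IsIso β ∧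
        vm ◁ α = (α_ vm f₁ wm).inv ≫ β ▷ wm ≫ (α_ vm f₂ wm).hom
  bf4c : ∀ {X Y Z : B} (wm : Y ⟶ X) (f₁ f₂ : Z ⟶ Y) (α : f₁ ≫ wm ⟶ f₂ ≫ wm)
      {D D' : B} (vm : D ⟶ Z) (β : vm ≫ f₁ ⟶ vm ≫ f₂)
      (vm' : D' ⟶ Z) (β' : vm' ≫ f₁ ⟶ vm' ≫ f₂),
      W wm → W vm → W vm' →
      (vm ◁ α = (α_ vm f₁ wm).inv ≫ β ▷ wm ≫ (α_ vm f₂ wm).hom) →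
      (vm' ◁ α = (α_ vm' f₁ wm).inv ≫ β' ▷ wm ≫ (α_ vm' f₂ wm).hom) →
      ∃ (E : B) (um : E ⟶ D) (um' : E ⟶ D') (ζ : um ≫ vm ≅ um' ≫ vm'),
        W (um ≫ vm) ∧
        ζ.hom ▷ f₁ ≫ (α_ um' vm' f₁).hom ≫ um' ◁ β' ≫ (α_ um' vm' f₂).inv
          = (α_ um vm f₁).hom ≫ um ◁ β ≫ (α_ um vm f₂).inv ≫ ζ.hom ▷ f₂
  bf5 : ∀ {X Y : B} (vm wm : X ⟶ Y), W wm → Nonempty (vm ≅ wm) → W vm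
variable {B : Type u} [Bicategory.{w, v} B]

/-- The data of a representative of a 2-morphism in Pronk's bicategory of fractions:
a quintuple `(obj, v₁, v₂, α, β)`. -/
structure PronkSq {A Bb A₁ A₂ : B}
    (w₁ : A₁ ⟶ A) (f₁ : A₁ ⟶ Bb) (w₂ : A₂ ⟶ A) (f₂ : A₂ ⟶ Bb) where
  obj : B
  v₁ : obj ⟶ A₁
  v₂ : obj ⟶ A₂
  α : v₁ ≫ w₁ ⟶ v₂ ≫ w₂
  β : v₁ ≫ f₁ ⟶ v₂ ≫ f₂

/-- Pronk's relation on quintuples representing 2-morphisms of the bicategory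
of fractions. -/
def PronkRel (W : ∀ ⦃X Y : B⦄, (X ⟶ Y) → Prop) {A Bb A₁ A₂ : B}
    (w₁ : A₁ ⟶ A) (f₁ : A₁ ⟶ Bb) (w₂ : A₂ ⟶ A) (f₂ : A₂ ⟶ Bb)
    (Q Q' : PronkSq w₁ f₁ w₂ f₂) : Prop :=
  ∃ (A₄ : B) (z : A₄ ⟶ Q.obj) (z' : A₄ ⟶ Q'.obj)
    (σ₁ : z' ≫ Q'.v₁ ≅ z ≫ Q.v₁) (σ₂ : z ≫ Q.v₂ ≅ z' ≫ Q'.v₂),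
    W ((z ≫ Q.v₁) ≫ w₁) ∧
    (σ₁.hom ▷ w₁ ≫ (α_ z Q.v₁ w₁).hom ≫ z ◁ Q.α ≫ (α_ z Q.v₂ w₂).inv ≫ σ₂.hom ▷ w₂
       = (α_ z' Q'.v₁ w₁).hom ≫ z' ◁ Q'.α ≫ (α_ z' Q'.v₂ w₂).inv) ∧
    (σ₁.hom ▷ f₁ ≫ (α_ z Q.v₁ f₁).hom ≫ z ◁ Q.β ≫ (α_ z Q.v₂ f₂).inv ≫ σ₂.hom ▷ f₂
       = (α_ z' Q'.v₁ f₁).hom ≫ z' ◁ Q'.β ≫ (α_ z' Q'.v₂ f₂).inv)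
variable {B : Type u} [Bicategory.{w, v} B]

/-- An "almost canonical" representative of a 2-morphism in a bicategory of fractions
(relative to a fixed choice `(E, p, q, ς)` completing the cospan `(w₁, w₂)`): a triple
`(obj, t, φ)` with `t ∈ W`. -/
structure AlmostTriple (W : ∀ ⦃X Y : B⦄, (X ⟶ Y) → Prop)
    {Bb A₁ A₂ E : B} (f₁ : A₁ ⟶ Bb) (f₂ : A₂ ⟶ Bb) (p : E ⟶ A₁) (q : E ⟶ A₂) where
  obj : B
  t : obj ⟶ E
  ht : W t
  φ : (t ≫ p) ≫ f₁ ⟶ (t ≫ q) ≫ f₂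

/-- The relation `∼` on almost canonical triples. -/
def TripleRel (W : ∀ ⦃X Y : B⦄, (X ⟶ Y) → Prop)
    {Bb A₁ A₂ E : B} (f₁ : A₁ ⟶ Bb) (f₂ : A₂ ⟶ Bb) (p : E ⟶ A₁) (q : E ⟶ A₂)
    (T T' : AlmostTriple W f₁ f₂ p q) : Prop :=
  ∃ (A₄ : B) (u : A₄ ⟶ T.obj) (u' : A₄ ⟶ T'.obj) (σ : u' ≫ T'.t ≅ u ≫ T.t),
    W u ∧
    σ.hom ▷ (p ≫ f₁) ≫ (α_ u T.t (p ≫ f₁)).hom ≫ u ◁ (α_ T.t p f₁).inv ≫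
        u ◁ T.φ ≫ u ◁ (α_ T.t q f₂).hom ≫ (α_ u T.t (q ≫ f₂)).inv ≫ σ.inv ▷ (q ≫ f₂)
      = (α_ u' T'.t (p ≫ f₁)).hom ≫ u' ◁ (α_ T'.t p f₁).inv ≫ u' ◁ T'.φ ≫
        u' ◁ (α_ T'.t q f₂).hom ≫ (α_ u' T'.t (q ≫ f₂)).inv
/-- The quintuple associated to an almost canonical triple. -/
def tripleToSq (W : ∀ ⦃X Y : B⦄, (X ⟶ Y) → Prop)
    {A Bb A₁ A₂ E : B}
    (w₁ : A₁ ⟶ A) (f₁ : A₁ ⟶ Bb) (w₂ : A₂ ⟶ A) (f₂ : A₂ ⟶ Bb)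
    (p : E ⟶ A₁) (q : E ⟶ A₂) (ς : p ≫ w₁ ≅ q ≫ w₂)
    (T : AlmostTriple W f₁ f₂ p q) : PronkSq w₁ f₁ w₂ f₂ :=
  ⟨T.obj, T.t ≫ p, T.t ≫ q, (α_ T.t p w₁).hom ≫ T.t ◁ ς.hom ≫ (α_ T.t q w₂).inv, T.φ⟩

/-- The valid quintuples, i.e. the actual representatives of 2-morphisms of the bicategory
of fractions. -/
def ValidSq (W : ∀ ⦃X Y : B⦄, (X ⟶ Y) → Prop) {A Bb A₁ A₂ : B}
    (w₁ : A₁ ⟶ A) (f₁ : A₁ ⟶ Bb) (w₂ : A₂ ⟶ A) (f₂ : A₂ ⟶ Bb) : Type _ :=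
  {Q : PronkSq w₁ f₁ w₂ f₂ // W (Q.v₁ ≫ w₁) ∧ IsIso Q.α}



namespace St12
variable {B : Type u} [Bicategory.{w, v} B] [Bicategory.Strict B]
variable {W : ∀ ⦃X Y : B⦄, (X ⟶ Y) → Prop}

/-- If `v ∈ W` and `f ≫ v ∈ W` then `f` admits a refinement `r` with `r ≫ f ∈ W`. -/
lemma locW (hBF : PronkBF W) {X Y Z : B} (f : X ⟶ Y) (v : Y ⟶ Z)
    (hv : W v) (hfv : W (f ≫ v)) : ∃ (R : B) (r : R ⟶ X), W (r ≫ f) := by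
  obtain ⟨D, w', h, hw', ⟨e⟩⟩ := hBF.bf3 (f ≫ v) v hfv
  have hiso : IsIso (e.hom ≫ eqToHom (by simp : h ≫ f ≫ v = (h ≫ f) ≫ v)) := by
    infer_instance
  obtain ⟨D', um, β, hum, hβiso, -⟩ := hBF.bf4b v w' (h ≫ f)
      (e.hom ≫ eqToHom (by simp)) hv hiso
  refine ⟨D', um ≫ h, ?_⟩
  have h2 : W (um ≫ w') := hBF.bf2 _ _ hum hw'
  have h5 := hBF.bf5 ((um ≫ h) ≫ f) (um ≫ w') h2
      ⟨eqToIso (by simp) ≪≫ (@asIso _ _ _ _ β hβiso).symm⟩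
  exact h5

/-- Two parallel 2-cells that agree after right whiskering by an element of `W` agree
after refining by some left whiskering in `W`. -/
lemma cancelW (hBF : PronkBF W) {X Y Z : B} (wm : Y ⟶ Z) (hw : W wm)
    {h₁ h₂ : X ⟶ Y} (γ δ : h₁ ⟶ h₂) (hδ : IsIso δ) (hγδ : γ ▷ wm = δ ▷ wm) :
    ∃ (V : B) (vm : V ⟶ X), W vm ∧ vm ◁ γ = vm ◁ δ := by
  have := hδ
  set eps : h₁ ⟶ h₁ := γ ≫ inv δ with hε
  have hεw : eps ▷ wm = 𝟙 _ := by
    rw [hε, comp_whiskerRight, hγδ, ← comp_whiskerRight]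
    simp
  obtain ⟨E', um, um', ζ, hWu, heq⟩ := hBF.bf4c wm h₁ h₁ (𝟙 (h₁ ≫ wm))
      (𝟙 X) (𝟙 X ◁ eps) (𝟙 X) (𝟙 (𝟙 X ≫ h₁)) hw (hBF.bf1 X) (hBF.bf1 X)
      (by simp [hεw]) (by simp)
  simp at heq
  have hζ : IsIso (ζ.hom ▷ h₁) := ⟨ζ.inv ▷ h₁, by rw [← comp_whiskerRight]; simp,
      by rw [← comp_whiskerRight]; simp⟩
  have h2 : (ρ_ um).hom ▷ h₁ ≫ um ◁ eps ≫ (ρ_ um).inv ▷ h₁ = 𝟙 _ := by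
    have h2' : ((ρ_ um).hom ▷ h₁ ≫ um ◁ eps ≫ (ρ_ um).inv ▷ h₁) ≫ ζ.hom ▷ h₁
        = 𝟙 _ ≫ ζ.hom ▷ h₁ := by simpa using heq.symm
    exact (cancel_mono _).1 h2'
  have h1 : um ◁ eps = 𝟙 _ := by
    have := congrArg (fun x => (ρ_ um).inv ▷ h₁ ≫ x ≫ (ρ_ um).hom ▷ h₁) h2
    simpa using this
  have hW : W um := hBF.bf5 um (um ≫ 𝟙 X) hWu ⟨(ρ_ um).symm⟩
  refine ⟨E', um, hW, ?_⟩
  have h4 := congrArg (fun x => x ≫ um ◁ δ) h1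
  simpa [hε, ← Bicategory.whiskerLeft_comp] using h4

attribute [local simp] Bicategory.Strict.associator_eqToIso
  Bicategory.Strict.leftUnitor_eqToIso Bicategory.Strict.rightUnitor_eqToIso

section Main
variable (hBF : PronkBF W) {A Bb A₁ A₂ E : B}
  {w₁ : A₁ ⟶ A} {f₁ : A₁ ⟶ Bb} {w₂ : A₂ ⟶ A} {f₂ : A₂ ⟶ Bb}
  (hw₁ : W w₁) (hw₂ : W w₂) {p : E ⟶ A₁} {q : E ⟶ A₂} (hp : W p) {ς : p ≫ w₁ ≅ q ≫ w₂}

include hBF hw₁ hw₂ hp in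
lemma lemA {T T' : AlmostTriple W f₁ f₂ p q} (h : TripleRel W f₁ f₂ p q T T') :
    PronkRel W w₁ f₁ w₂ f₂ (tripleToSq W w₁ f₁ w₂ f₂ p q ς T)
      (tripleToSq W w₁ f₁ w₂ f₂ p q ς T') := by
  obtain ⟨A₄, u, u', σ, hWu, hφ⟩ := h
  refine ⟨A₄, u, u',
    (α_ u' T'.t p).symm ≪≫ whiskerRightIso σ p ≪≫ α_ u T.t p,
    (α_ u T.t q).symm ≪≫ whiskerRightIso σ.symm q ≪≫ α_ u' T'.t q, ?_, ?_, ?_⟩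
  · simpa [tripleToSq] using hBF.bf2 _ _ (hBF.bf2 _ _ hWu T.ht) (hBF.bf2 _ _ hp hw₁)
  · dsimp [tripleToSq]
    calc _ = 𝟙 _ ⊗≫ (σ.hom ▷ (p ≫ w₁) ≫ (u ≫ T.t) ◁ ς.hom) ⊗≫ σ.inv ▷ (q ≫ w₂) ⊗≫ 𝟙 _ := by
          simp only [whiskerRightIso_hom, Iso.symm_hom]
          bicategory
      _ = 𝟙 _ ⊗≫ (u' ≫ T'.t) ◁ ς.hom ⊗≫ (σ.hom ▷ (q ≫ w₂) ≫ σ.inv ▷ (q ≫ w₂)) ⊗≫ 𝟙 _ := by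
          rw [← whisker_exchange]; bicategory
      _ = _ := by rw [← comp_whiskerRight, Iso.hom_inv_id, id_whiskerRight]; bicategory
  · dsimp [tripleToSq]
    calc _ = 𝟙 _ ⊗≫ (σ.hom ▷ (p ≫ f₁) ≫ (α_ u T.t (p ≫ f₁)).hom ≫ u ◁ (α_ T.t p f₁).inv ≫
              u ◁ T.φ ≫ u ◁ (α_ T.t q f₂).hom ≫ (α_ u T.t (q ≫ f₂)).inv ≫
              σ.inv ▷ (q ≫ f₂)) ⊗≫ 𝟙 _ := by
          simp only [whiskerRightIso_hom, Iso.symm_hom]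
          bicategory
      _ = 𝟙 _ ⊗≫ ((α_ u' T'.t (p ≫ f₁)).hom ≫ u' ◁ (α_ T'.t p f₁).inv ≫ u' ◁ T'.φ ≫
              u' ◁ (α_ T'.t q f₂).hom ≫ (α_ u' T'.t (q ≫ f₂)).inv) ⊗≫ 𝟙 _ := by
          rw [hφ]
      _ = _ := by bicategory

include hBF hw₁ hw₂ hp in
lemma lemB {T T' : AlmostTriple W f₁ f₂ p q}
    (h : PronkRel W w₁ f₁ w₂ f₂ (tripleToSq W w₁ f₁ w₂ f₂ p q ς T)
      (tripleToSq W w₁ f₁ w₂ f₂ p q ς T')) : TripleRel W f₁ f₂ p q T T' := by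
  obtain ⟨A₄, z, z', σ₁, σ₂, hW, hEα, hEβ⟩ := h
  dsimp only [tripleToSq] at z z' σ₁ σ₂ hW hEα hEβ
  -- Step 1: lift `σ₁` through `p` (BF4b)
  obtain ⟨D₀, v₀, β, hv₀, hβiso, hβ⟩ := hBF.bf4b p (z' ≫ T'.t) (z ≫ T.t)
      ((α_ z' T'.t p).hom ≫ σ₁.hom ≫ (α_ z T.t p).inv) hp inferInstance
  have hβ2 : β ▷ p = (α_ v₀ (z' ≫ T'.t) p).hom ≫
      v₀ ◁ ((α_ z' T'.t p).hom ≫ σ₁.hom ≫ (α_ z T.t p).inv) ≫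
      (α_ v₀ (z ≫ T.t) p).inv := by
    rw [hβ]; simp
  -- Step 2: refine `z` into `W` (locW)
  obtain ⟨R, r, hr⟩ := locW hBF z ((T.t ≫ p) ≫ w₁)
      (hBF.bf2 _ _ (hBF.bf2 _ _ T.ht hp) hw₁) (by simpa using hW)
  -- Step 3: common refinement (BF3)
  obtain ⟨D₁, a, b, ha, ⟨θ⟩⟩ := hBF.bf3 v₀ r hv₀
  set c : D₁ ⟶ A₄ := a ≫ r with hc
  have hWcz : W (c ≫ z) := by
    have h2 := hBF.bf2 _ _ ha hr
    simpa [hc] using h2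
  obtain ⟨σc, hK1⟩ : ∃ σc : (c ≫ z') ≫ T'.t ≅ (c ≫ z) ≫ T.t,
      σc.hom ▷ p = (α_ (c ≫ z') T'.t p).hom ≫ (α_ c z' (T'.t ≫ p)).hom ≫
        c ◁ σ₁.hom ≫ (α_ c z (T.t ≫ p)).inv ≫ (α_ (c ≫ z) T.t p).inv := by
    refine ⟨α_ c z' T'.t ≪≫ whiskerRightIso θ (z' ≫ T'.t) ≪≫ α_ b v₀ (z' ≫ T'.t)
      ≪≫ whiskerLeftIso b (asIso β) ≪≫ (α_ b v₀ (z ≫ T.t)).symm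
      ≪≫ whiskerRightIso θ.symm (z ≫ T.t) ≪≫ (α_ c z T.t).symm, ?_⟩
    calc _ = 𝟙 _ ⊗≫ (θ.hom ▷ (z' ≫ T'.t)) ▷ p ⊗≫ b ◁ (β ▷ p) ⊗≫
          (θ.inv ▷ (z ≫ T.t)) ▷ p ⊗≫ 𝟙 _ := by
          simp only [Iso.trans_hom, whiskerRightIso_hom, whiskerLeftIso_hom, Iso.symm_hom,
            asIso_hom]
          bicategory
      _ = 𝟙 _ ⊗≫ (θ.hom ▷ (z' ≫ T'.t ≫ p) ≫ (b ≫ v₀) ◁ σ₁.hom) ⊗≫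
          θ.inv ▷ (z ≫ T.t ≫ p) ⊗≫ 𝟙 _ := by
          rw [hβ2]; bicategory
      _ = 𝟙 _ ⊗≫ ((a ≫ r) ◁ σ₁.hom ≫ θ.hom ▷ (z ≫ T.t ≫ p)) ⊗≫
          θ.inv ▷ (z ≫ T.t ≫ p) ⊗≫ 𝟙 _ := by
          rw [← whisker_exchange]
      _ = 𝟙 _ ⊗≫ (a ≫ r) ◁ σ₁.hom ⊗≫ (θ.hom ▷ (z ≫ T.t ≫ p) ≫
          θ.inv ▷ (z ≫ T.t ≫ p)) ⊗≫ 𝟙 _ := by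
          bicategory
      _ = _ := by rw [hom_inv_whiskerRight]; bicategory
  have hK1i : σc.inv ▷ p = (α_ (c ≫ z) T.t p).hom ≫ (α_ c z (T.t ≫ p)).hom ≫
      c ◁ σ₁.inv ≫ (α_ c z' (T'.t ≫ p)).inv ≫ (α_ (c ≫ z') T'.t p).inv := by
    have hiso : whiskerRightIso σc p = α_ (c ≫ z') T'.t p ≪≫ α_ c z' (T'.t ≫ p) ≪≫
        whiskerLeftIso c σ₁ ≪≫ (α_ c z (T.t ≫ p)).symm ≪≫ (α_ (c ≫ z) T.t p).symm :=
      Iso.ext (by simpa using hK1)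
    have h3 := congrArg Iso.inv hiso
    simpa using h3
  have hx2 : σc.hom ▷ (q ≫ w₂) = ((c ≫ z') ≫ T'.t) ◁ ς.inv ≫ σc.hom ▷ (p ≫ w₁) ≫
      ((c ≫ z) ≫ T.t) ◁ ς.hom := by
    rw [← whisker_exchange σc.hom ς.hom, ← Bicategory.whiskerLeft_comp_assoc,
      Iso.inv_hom_id, Bicategory.whiskerLeft_id, Category.id_comp]
  set Δh : ((c ≫ z) ≫ T.t) ≫ q ⟶ ((c ≫ z') ≫ T'.t) ≫ q :=
    (α_ (c ≫ z) T.t q).hom ≫ (α_ c z (T.t ≫ q)).hom ≫ c ◁ σ₂.hom ≫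
      (α_ c z' (T'.t ≫ q)).inv ≫ (α_ (c ≫ z') T'.t q).inv with hΔ
  have hΔiso : IsIso Δh := by rw [hΔ]; infer_instance
  have hX : σc.hom ▷ q ▷ w₂ ≫ Δh ▷ w₂ = 𝟙 _ := by
    rw [hΔ]
    calc _ = 𝟙 _ ⊗≫ σc.hom ▷ (q ≫ w₂) ⊗≫ c ◁ (σ₂.hom ▷ w₂) ⊗≫ 𝟙 _ := by
          bicategory
      _ = 𝟙 _ ⊗≫ ((c ≫ z') ≫ T'.t) ◁ ς.inv ⊗≫ (σc.hom ▷ p) ▷ w₁ ⊗≫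
          ((c ≫ z) ≫ T.t) ◁ ς.hom ⊗≫ c ◁ (σ₂.hom ▷ w₂) ⊗≫ 𝟙 _ := by
          rw [hx2]; bicategory
      _ = 𝟙 _ ⊗≫ ((c ≫ z') ≫ T'.t) ◁ ς.inv ⊗≫ c ◁ (σ₁.hom ▷ w₁ ≫
          (α_ z (T.t ≫ p) w₁).hom ≫
          z ◁ ((α_ T.t p w₁).hom ≫ T.t ◁ ς.hom ≫ (α_ T.t q w₂).inv) ≫
          (α_ z (T.t ≫ q) w₂).inv ≫ σ₂.hom ▷ w₂) ⊗≫ 𝟙 _ := by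
          rw [hK1]; bicategory
      _ = 𝟙 _ ⊗≫ ((c ≫ z') ≫ T'.t) ◁ ς.inv ⊗≫ c ◁ ((α_ z' (T'.t ≫ p) w₁).hom ≫
          z' ◁ ((α_ T'.t p w₁).hom ≫ T'.t ◁ ς.hom ≫ (α_ T'.t q w₂).inv) ≫
          (α_ z' (T'.t ≫ q) w₂).inv) ⊗≫ 𝟙 _ := by
          rw [hEα]
      _ = 𝟙 _ ⊗≫ ((c ≫ z') ≫ T'.t) ◁ (ς.inv ≫ ς.hom) ⊗≫ 𝟙 _ := by
          bicategory
      _ = 𝟙 _ := by rw [Iso.inv_hom_id]; bicategory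
  have hKw : (σc.inv ▷ q) ▷ w₂ = Δh ▷ w₂ := by
    have h1 : σc.inv ▷ q ▷ w₂ ≫ σc.hom ▷ q ▷ w₂ = 𝟙 _ := by
      rw [← comp_whiskerRight, ← comp_whiskerRight]; simp
    calc σc.inv ▷ q ▷ w₂ = σc.inv ▷ q ▷ w₂ ≫ σc.hom ▷ q ▷ w₂ ≫ Δh ▷ w₂ := by
          rw [hX]; simp
      _ = (σc.inv ▷ q ▷ w₂ ≫ σc.hom ▷ q ▷ w₂) ≫ Δh ▷ w₂ := by
          simp only [Category.assoc]
      _ = Δh ▷ w₂ := by rw [h1]; simp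
  obtain ⟨V, vm, hvm, hvmEq⟩ := cancelW hBF w₂ hw₂ (σc.inv ▷ q) Δh hΔiso hKw
  refine ⟨V, vm ≫ (c ≫ z), vm ≫ (c ≫ z'),
    α_ vm (c ≫ z') T'.t ≪≫ whiskerLeftIso vm σc ≪≫ (α_ vm (c ≫ z) T.t).symm,
    hBF.bf2 _ _ hvm hWcz, ?_⟩
  calc _ = 𝟙 _ ⊗≫ vm ◁ ((σc.hom ▷ p) ▷ f₁) ⊗≫ (vm ≫ (c ≫ z)) ◁ T.φ ⊗≫
        (vm ◁ (σc.inv ▷ q)) ▷ f₂ ⊗≫ 𝟙 _ := by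
        simp only [Iso.trans_hom, Iso.trans_inv, whiskerLeftIso_hom, whiskerLeftIso_inv,
          Iso.symm_hom, Iso.symm_inv]
        bicategory
    _ = 𝟙 _ ⊗≫ (vm ≫ c) ◁ (σ₁.hom ▷ f₁ ≫ (α_ z (T.t ≫ p) f₁).hom ≫ z ◁ T.φ ≫
        (α_ z (T.t ≫ q) f₂).inv ≫ σ₂.hom ▷ f₂) ⊗≫ 𝟙 _ := by
        rw [hK1, hvmEq, hΔ]; bicategory
    _ = 𝟙 _ ⊗≫ (vm ≫ c) ◁ ((α_ z' (T'.t ≫ p) f₁).hom ≫ z' ◁ T'.φ ≫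
        (α_ z' (T'.t ≫ q) f₂).inv) ⊗≫ 𝟙 _ := by
        rw [hEβ]
    _ = _ := by bicategory

include hBF in
lemma pronkSymm {Q Q' : PronkSq w₁ f₁ w₂ f₂} (h : PronkRel W w₁ f₁ w₂ f₂ Q Q') :
    PronkRel W w₁ f₁ w₂ f₂ Q' Q := by
  obtain ⟨A₄, z, z', σ₁, σ₂, hW, hα, hβ⟩ := h
  refine ⟨A₄, z', z, σ₁.symm, σ₂.symm,
    hBF.bf5 _ _ hW ⟨whiskerRightIso σ₁ w₁⟩, ?_, ?_⟩
  · rw [← reassoc_of% hα]; simp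
  · rw [← reassoc_of% hβ]; simp

include hBF in
lemma pronkRefl {Q : PronkSq w₁ f₁ w₂ f₂} (hQ : W (Q.v₁ ≫ w₁)) :
    PronkRel W w₁ f₁ w₂ f₂ Q Q := by
  refine ⟨Q.obj, 𝟙 _, 𝟙 _, Iso.refl _, Iso.refl _, by simpa using hQ, by simp, by simp⟩

include hBF in
lemma pronkTrans {Q₁ Q₂ Q₃ : PronkSq w₁ f₁ w₂ f₂} (hmid : W (Q₂.v₁ ≫ w₁))
    (h12 : PronkRel W w₁ f₁ w₂ f₂ Q₁ Q₂) (h23 : PronkRel W w₁ f₁ w₂ f₂ Q₂ Q₃) :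
    PronkRel W w₁ f₁ w₂ f₂ Q₁ Q₃ := by
  obtain ⟨A₄, z, z', σ₁, σ₂, hW1, hα1, hβ1⟩ := h12
  obtain ⟨C, y, y', τ₁, τ₂, hW2, hα2, hβ2⟩ := h23
  obtain ⟨D, d, d', hd, ⟨ζ⟩⟩ := hBF.bf3 ((y ≫ Q₂.v₁) ≫ w₁) ((z' ≫ Q₂.v₁) ≫ w₁) (by exact hW2)
  obtain ⟨D', e, ι, he, hιiso, hι⟩ := hBF.bf4b (Q₂.v₁ ≫ w₁) (d ≫ z') (d' ≫ y)
      ((α_ d z' (Q₂.v₁ ≫ w₁)).hom ≫ d ◁ (α_ z' Q₂.v₁ w₁).inv ≫ ζ.hom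
        ≫ d' ◁ (α_ y Q₂.v₁ w₁).hom ≫ (α_ d' y (Q₂.v₁ ≫ w₁)).inv) hmid inferInstance
  have hinv : (inv ι ▷ (Q₂.v₁ ≫ w₁)) ≫ (ι ▷ (Q₂.v₁ ≫ w₁)) = 𝟙 _ := by
    rw [← comp_whiskerRight, IsIso.inv_hom_id, id_whiskerRight]
  refine ⟨D', (e ≫ d) ≫ z, (e ≫ d') ≫ y',
    α_ (e ≫ d') y' Q₃.v₁ ≪≫ whiskerLeftIso (e ≫ d') τ₁ ≪≫ (α_ (e ≫ d') y Q₂.v₁).symm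
      ≪≫ whiskerRightIso (α_ e d' y) Q₂.v₁ ≪≫ whiskerRightIso (asIso ι).symm Q₂.v₁
      ≪≫ whiskerRightIso (α_ e d z').symm Q₂.v₁ ≪≫ α_ (e ≫ d) z' Q₂.v₁
      ≪≫ whiskerLeftIso (e ≫ d) σ₁ ≪≫ (α_ (e ≫ d) z Q₁.v₁).symm,
    α_ (e ≫ d) z Q₁.v₂ ≪≫ whiskerLeftIso (e ≫ d) σ₂ ≪≫ (α_ (e ≫ d) z' Q₂.v₂).symm
      ≪≫ whiskerRightIso (α_ e d z') Q₂.v₂ ≪≫ whiskerRightIso (asIso ι) Q₂.v₂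
      ≪≫ whiskerRightIso (α_ e d' y).symm Q₂.v₂ ≪≫ α_ (e ≫ d') y Q₂.v₂
      ≪≫ whiskerLeftIso (e ≫ d') τ₂ ≪≫ (α_ (e ≫ d') y' Q₃.v₂).symm, ?_, ?_, ?_⟩
  · simpa using hBF.bf2 _ _ he (hBF.bf2 _ _ hd hW1)
  · calc _ = 𝟙 _ ⊗≫ (e ≫ d') ◁ (τ₁.hom ▷ w₁) ⊗≫ inv ι ▷ (Q₂.v₁ ≫ w₁) ⊗≫
        (e ≫ d) ◁ (σ₁.hom ▷ w₁ ≫ (α_ z Q₁.v₁ w₁).hom ≫ z ◁ Q₁.α ≫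
          (α_ z Q₁.v₂ w₂).inv ≫ σ₂.hom ▷ w₂) ⊗≫
        ι ▷ (Q₂.v₂ ≫ w₂) ⊗≫ (e ≫ d') ◁ (τ₂.hom ▷ w₂) ⊗≫ 𝟙 _ := by
          simp only [Iso.trans_hom, Iso.symm_hom, whiskerLeftIso_hom, whiskerRightIso_hom,
            asIso_hom, asIso_inv]
          bicategory
      _ = 𝟙 _ ⊗≫ (e ≫ d') ◁ (τ₁.hom ▷ w₁) ⊗≫ inv ι ▷ (Q₂.v₁ ≫ w₁) ⊗≫
        ((e ≫ d ≫ z') ◁ Q₂.α ≫ ι ▷ (Q₂.v₂ ≫ w₂)) ⊗≫ (e ≫ d') ◁ (τ₂.hom ▷ w₂) ⊗≫ 𝟙 _ := by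
          rw [hα1]; bicategory
      _ = 𝟙 _ ⊗≫ (e ≫ d') ◁ (τ₁.hom ▷ w₁) ⊗≫ (inv ι ▷ (Q₂.v₁ ≫ w₁) ≫ ι ▷ (Q₂.v₁ ≫ w₁)) ⊗≫
        (e ≫ d' ≫ y) ◁ Q₂.α ⊗≫ (e ≫ d') ◁ (τ₂.hom ▷ w₂) ⊗≫ 𝟙 _ := by
          rw [whisker_exchange]; bicategory
      _ = 𝟙 _ ⊗≫ (e ≫ d') ◁ (τ₁.hom ▷ w₁ ≫ (α_ y Q₂.v₁ w₁).hom ≫ y ◁ Q₂.α ≫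
          (α_ y Q₂.v₂ w₂).inv ≫ τ₂.hom ▷ w₂) ⊗≫ 𝟙 _ := by
          rw [hinv]; bicategory
      _ = 𝟙 _ ⊗≫ (e ≫ d') ◁ ((α_ y' Q₃.v₁ w₁).hom ≫ y' ◁ Q₃.α ≫ (α_ y' Q₃.v₂ w₂).inv) ⊗≫
          𝟙 _ := by rw [hα2]
      _ = _ := by bicategory
  · have hinvβ : (inv ι ▷ (Q₂.v₁ ≫ f₁)) ≫ (ι ▷ (Q₂.v₁ ≫ f₁)) = 𝟙 _ := by
      rw [← comp_whiskerRight, IsIso.inv_hom_id, id_whiskerRight]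
    calc _ = 𝟙 _ ⊗≫ (e ≫ d') ◁ (τ₁.hom ▷ f₁) ⊗≫ inv ι ▷ (Q₂.v₁ ≫ f₁) ⊗≫
        (e ≫ d) ◁ (σ₁.hom ▷ f₁ ≫ (α_ z Q₁.v₁ f₁).hom ≫ z ◁ Q₁.β ≫
          (α_ z Q₁.v₂ f₂).inv ≫ σ₂.hom ▷ f₂) ⊗≫
        ι ▷ (Q₂.v₂ ≫ f₂) ⊗≫ (e ≫ d') ◁ (τ₂.hom ▷ f₂) ⊗≫ 𝟙 _ := by
          simp only [Iso.trans_hom, Iso.symm_hom, whiskerLeftIso_hom, whiskerRightIso_hom,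
            asIso_hom, asIso_inv]
          bicategory
      _ = 𝟙 _ ⊗≫ (e ≫ d') ◁ (τ₁.hom ▷ f₁) ⊗≫ inv ι ▷ (Q₂.v₁ ≫ f₁) ⊗≫
        ((e ≫ d ≫ z') ◁ Q₂.β ≫ ι ▷ (Q₂.v₂ ≫ f₂)) ⊗≫ (e ≫ d') ◁ (τ₂.hom ▷ f₂) ⊗≫ 𝟙 _ := by
          rw [hβ1]; bicategory
      _ = 𝟙 _ ⊗≫ (e ≫ d') ◁ (τ₁.hom ▷ f₁) ⊗≫ (inv ι ▷ (Q₂.v₁ ≫ f₁) ≫ ι ▷ (Q₂.v₁ ≫ f₁)) ⊗≫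
        (e ≫ d' ≫ y) ◁ Q₂.β ⊗≫ (e ≫ d') ◁ (τ₂.hom ▷ f₂) ⊗≫ 𝟙 _ := by
          rw [whisker_exchange]; bicategory
      _ = 𝟙 _ ⊗≫ (e ≫ d') ◁ (τ₁.hom ▷ f₁ ≫ (α_ y Q₂.v₁ f₁).hom ≫ y ◁ Q₂.β ≫
          (α_ y Q₂.v₂ f₂).inv ≫ τ₂.hom ▷ f₂) ⊗≫ 𝟙 _ := by
          rw [hinvβ]; bicategory
      _ = 𝟙 _ ⊗≫ (e ≫ d') ◁ ((α_ y' Q₃.v₁ f₁).hom ≫ y' ◁ Q₃.β ≫ (α_ y' Q₃.v₂ f₂).inv) ⊗≫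
          𝟙 _ := by rw [hβ2]
      _ = _ := by bicategory


include hBF hw₁ hw₂ hp in
lemma sLem (Q : PronkSq w₁ f₁ w₂ f₂) (hQw : W (Q.v₁ ≫ w₁)) (hQα : IsIso Q.α) :
    ∃ T : AlmostTriple W f₁ f₂ p q,
      PronkRel W w₁ f₁ w₂ f₂ Q (tripleToSq W w₁ f₁ w₂ f₂ p q ς T) := by
  obtain ⟨D, a, e, ha, ⟨κ⟩⟩ := hBF.bf3 p Q.v₁ hp
  obtain ⟨μ, hμi⟩ : ∃ μ : (e ≫ q) ≫ w₂ ≅ (a ≫ Q.v₂) ≫ w₂,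
      μ.inv = (α_ a Q.v₂ w₂).hom ≫ a ◁ inv Q.α ≫ (α_ a Q.v₁ w₁).inv ≫ κ.hom ▷ w₁ ≫
        (α_ e p w₁).hom ≫ e ◁ ς.hom ≫ (α_ e q w₂).inv := by
    refine ⟨α_ e q w₂ ≪≫ whiskerLeftIso e ς.symm ≪≫ (α_ e p w₁).symm ≪≫
      whiskerRightIso κ.symm w₁ ≪≫ α_ a Q.v₁ w₁ ≪≫ whiskerLeftIso a (asIso Q.α) ≪≫
      (α_ a Q.v₂ w₂).symm, ?_⟩
    simp
  obtain ⟨D', bb, ν, hb, hνiso, hν⟩ := hBF.bf4b w₂ (e ≫ q) (a ≫ Q.v₂) μ.hom hw₂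
    inferInstance
  have h1 : W ((a ≫ Q.v₁) ≫ w₁) := by simpa using hBF.bf2 _ _ ha hQw
  have h2 : W (e ≫ p ≫ w₁) := hBF.bf5 _ _ h1
      ⟨(α_ e p w₁).symm ≪≫ whiskerRightIso κ.symm w₁⟩
  obtain ⟨R, rr, hrr⟩ := locW hBF e (p ≫ w₁) (hBF.bf2 _ _ hp hw₁) h2
  obtain ⟨D₂, a₂, b₂, ha₂, ⟨θ⟩⟩ := hBF.bf3 bb rr hb
  set c := a₂ ≫ rr with hc
  have ht : W (c ≫ e) := by simpa [hc] using hBF.bf2 _ _ ha₂ hrr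
  have hν2 : inv ν ▷ w₂ = (α_ bb (a ≫ Q.v₂) w₂).hom ≫ bb ◁ μ.inv ≫
      (α_ bb (e ≫ q) w₂).inv := by
    have hiso : whiskerLeftIso bb μ = (α_ bb (e ≫ q) w₂).symm ≪≫
        whiskerRightIso (asIso ν) w₂ ≪≫ α_ bb (a ≫ Q.v₂) w₂ := Iso.ext (by simpa using hν)
    have h3 : bb ◁ μ.inv = (α_ bb (a ≫ Q.v₂) w₂).inv ≫ inv ν ▷ w₂ ≫
        (α_ bb (e ≫ q) w₂).hom := by
      simpa only [Iso.trans_inv, Iso.symm_inv, Iso.symm_hom, whiskerLeftIso_inv,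
        whiskerRightIso_inv, asIso_inv, Category.assoc] using congrArg Iso.inv hiso
    rw [h3]
    simp
  obtain ⟨ρ, hρi⟩ : ∃ ρ : c ≫ (e ≫ q) ≅ c ≫ (a ≫ Q.v₂),
      ρ.inv ▷ w₂ = (α_ c (a ≫ Q.v₂) w₂).hom ≫ c ◁ μ.inv ≫ (α_ c (e ≫ q) w₂).inv := by
    refine ⟨whiskerRightIso θ (e ≫ q) ≪≫ α_ b₂ bb (e ≫ q) ≪≫ whiskerLeftIso b₂ (asIso ν)
      ≪≫ (α_ b₂ bb (a ≫ Q.v₂)).symm ≪≫ whiskerRightIso θ.symm (a ≫ Q.v₂), ?_⟩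
    calc _ = 𝟙 _ ⊗≫ (θ.hom ▷ (a ≫ Q.v₂)) ▷ w₂ ⊗≫ b₂ ◁ (inv ν ▷ w₂) ⊗≫
          (θ.inv ▷ (e ≫ q)) ▷ w₂ ⊗≫ 𝟙 _ := by
          simp only [Iso.trans_inv, Iso.symm_inv, whiskerLeftIso_inv, whiskerRightIso_inv,
            Iso.symm_hom, asIso_inv]
          bicategory
      _ = 𝟙 _ ⊗≫ (θ.hom ▷ ((a ≫ Q.v₂) ≫ w₂) ≫ (b₂ ≫ bb) ◁ μ.inv) ⊗≫
          θ.inv ▷ ((e ≫ q) ≫ w₂) ⊗≫ 𝟙 _ := by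
          rw [hν2]; bicategory
      _ = 𝟙 _ ⊗≫ ((a₂ ≫ rr) ◁ μ.inv ≫ θ.hom ▷ ((e ≫ q) ≫ w₂)) ⊗≫
          θ.inv ▷ ((e ≫ q) ≫ w₂) ⊗≫ 𝟙 _ := by
          rw [← whisker_exchange]
      _ = 𝟙 _ ⊗≫ (a₂ ≫ rr) ◁ μ.inv ⊗≫ (θ.hom ▷ ((e ≫ q) ≫ w₂) ≫
          θ.inv ▷ ((e ≫ q) ≫ w₂)) ⊗≫ 𝟙 _ := by
          bicategory
      _ = _ := by rw [hom_inv_whiskerRight]; bicategory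
  refine ⟨⟨D₂, c ≫ e, ht,
    𝟙 _ ⊗≫ c ◁ (κ.inv ▷ f₁) ⊗≫ (c ≫ a) ◁ Q.β ⊗≫ ρ.inv ▷ f₂ ⊗≫ 𝟙 _⟩,
    D₂, c ≫ a, 𝟙 D₂,
    λ_ ((c ≫ e) ≫ p) ≪≫ α_ c e p ≪≫ whiskerLeftIso c κ.symm ≪≫ (α_ c a Q.v₁).symm,
    α_ c a Q.v₂ ≪≫ ρ.symm ≪≫ (α_ c e q).symm ≪≫ (λ_ ((c ≫ e) ≫ q)).symm, ?_, ?_, ?_⟩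
  · have hm : W ((c ≫ e) ≫ (p ≫ w₁)) := hBF.bf2 _ _ ht (hBF.bf2 _ _ hp hw₁)
    exact hBF.bf5 _ _ hm ⟨whiskerRightIso (α_ c a Q.v₁) w₁ ≪≫ α_ c (a ≫ Q.v₁) w₁ ≪≫
      whiskerLeftIso c (whiskerRightIso κ w₁ ≪≫ α_ e p w₁) ≪≫ (α_ c e (p ≫ w₁)).symm⟩
  · dsimp only [tripleToSq]
    calc _ = 𝟙 _ ⊗≫ c ◁ (κ.inv ▷ w₁) ⊗≫ (c ≫ a) ◁ Q.α ⊗≫ ρ.inv ▷ w₂ ⊗≫ 𝟙 _ := by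
          simp only [Iso.trans_hom, Iso.symm_hom, whiskerLeftIso_hom, whiskerRightIso_hom,
            asIso_hom, asIso_inv, Iso.symm_inv]
          bicategory
      _ = 𝟙 _ ⊗≫ c ◁ (κ.inv ▷ w₁) ⊗≫ (c ≫ a) ◁ Q.α ⊗≫ c ◁ ((α_ a Q.v₂ w₂).hom ≫
          a ◁ inv Q.α ≫ (α_ a Q.v₁ w₁).inv ≫ κ.hom ▷ w₁ ≫ (α_ e p w₁).hom ≫
          e ◁ ς.hom ≫ (α_ e q w₂).inv) ⊗≫ 𝟙 _ := by
          rw [hρi, hμi]; bicategory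
      _ = 𝟙 _ ⊗≫ c ◁ (κ.inv ▷ w₁) ⊗≫ (c ≫ a) ◁ (Q.α ≫ inv Q.α) ⊗≫ c ◁ (κ.hom ▷ w₁) ⊗≫
          c ◁ (e ◁ ς.hom) ⊗≫ 𝟙 _ := by
          bicategory
      _ = 𝟙 _ ⊗≫ (c ◁ (κ.inv ▷ w₁) ≫ c ◁ (κ.hom ▷ w₁)) ⊗≫ c ◁ (e ◁ ς.hom) ⊗≫ 𝟙 _ := by
          rw [IsIso.hom_inv_id]; bicategory
      _ = 𝟙 _ ⊗≫ c ◁ (κ.inv ▷ w₁ ≫ κ.hom ▷ w₁) ⊗≫ c ◁ (e ◁ ς.hom) ⊗≫ 𝟙 _ := by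
          bicategory
      _ = 𝟙 _ ⊗≫ c ◁ (e ◁ ς.hom) ⊗≫ 𝟙 _ := by rw [inv_hom_whiskerRight]; bicategory
      _ = _ := by bicategory
  · dsimp only [tripleToSq]
    simp only [Iso.trans_hom, Iso.symm_hom, whiskerLeftIso_hom, whiskerRightIso_hom,
      asIso_hom, asIso_inv, Iso.symm_inv]
    bicategory

end Main
end St12

/-- two almost canonical triples are `∼`-related iff the associated
quintuples are Pronk-equivalent; consequently the induced map `N` from `∼`-classes of triples
to Pronk classes of valid quintuples is a well-defined bijection. -/
theorem statement12 {B : Type u} [Bicategory.{w, v} B] [Bicategory.Strict B]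
    (W : ∀ ⦃X Y : B⦄, (X ⟶ Y) → Prop) (hBF : PronkBF W)
    {A Bb A₁ A₂ E : B}
    (w₁ : A₁ ⟶ A) (f₁ : A₁ ⟶ Bb) (w₂ : A₂ ⟶ A) (f₂ : A₂ ⟶ Bb)
    (hw₁ : W w₁) (hw₂ : W w₂)
    (p : E ⟶ A₁) (q : E ⟶ A₂) (hp : W p) (ς : p ≫ w₁ ≅ q ≫ w₂) :
    (∀ T T' : AlmostTriple W f₁ f₂ p q,
        TripleRel W f₁ f₂ p q T T' ↔
          PronkRel W w₁ f₁ w₂ f₂ (tripleToSq W w₁ f₁ w₂ f₂ p q ς T)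
            (tripleToSq W w₁ f₁ w₂ f₂ p q ς T')) ∧
    ∃ N : Quot (TripleRel W f₁ f₂ p q) →
        Quot (fun Q Q' : ValidSq W w₁ f₁ w₂ f₂ => PronkRel W w₁ f₁ w₂ f₂ Q.1 Q'.1),
      (∀ (T : AlmostTriple W f₁ f₂ p q)
          (h : W ((tripleToSq W w₁ f₁ w₂ f₂ p q ς T).v₁ ≫ w₁) ∧
               IsIso (tripleToSq W w₁ f₁ w₂ f₂ p q ς T).α),
          N (Quot.mk _ T) = Quot.mk _ ⟨tripleToSq W w₁ f₁ w₂ f₂ p q ς T, h⟩) ∧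
      Function.Bijective N := by
  have hvalid : ∀ T : AlmostTriple W f₁ f₂ p q,
      W ((tripleToSq W w₁ f₁ w₂ f₂ p q ς T).v₁ ≫ w₁) ∧
        IsIso (tripleToSq W w₁ f₁ w₂ f₂ p q ς T).α := by
    intro T
    constructor
    · simpa [tripleToSq] using hBF.bf2 _ _ T.ht (hBF.bf2 _ _ hp hw₁)
    · show IsIso ((α_ T.t p w₁).hom ≫ T.t ◁ ς.hom ≫ (α_ T.t q w₂).inv); infer_instance
  have hiff : ∀ T T' : AlmostTriple W f₁ f₂ p q,
      TripleRel W f₁ f₂ p q T T' ↔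
        PronkRel W w₁ f₁ w₂ f₂ (tripleToSq W w₁ f₁ w₂ f₂ p q ς T)
          (tripleToSq W w₁ f₁ w₂ f₂ p q ς T') :=
    fun T T' => ⟨fun h => St12.lemA hBF hw₁ hw₂ hp h, fun h => St12.lemB hBF hw₁ hw₂ hp h⟩
  refine ⟨hiff, ?_⟩
  have hequiv : Equivalence
      (fun Q Q' : ValidSq W w₁ f₁ w₂ f₂ => PronkRel W w₁ f₁ w₂ f₂ Q.1 Q'.1) :=
    ⟨fun Q => St12.pronkRefl hBF Q.2.1, fun h => St12.pronkSymm hBF h,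
      fun {x y z} h1 h2 => St12.pronkTrans hBF y.2.1 h1 h2⟩
  refine ⟨Quot.lift
      (fun T => Quot.mk _ (⟨tripleToSq W w₁ f₁ w₂ f₂ p q ς T, hvalid T⟩ :
        ValidSq W w₁ f₁ w₂ f₂))
      (fun T T' h => Quot.sound ((hiff T T').1 h)), fun T h => rfl, ?_, ?_⟩
  · intro x y hNeq
    induction x using Quot.ind with | _ T => ?_
    induction y using Quot.ind with | _ T' => ?_
    have h1 := (hequiv.eqvGen_iff).1 (Quot.eq.1 hNeq)
    exact Quot.sound ((hiff T T').2 h1)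
  · intro y
    induction y using Quot.ind with | _ Qv => ?_
    obtain ⟨T, hT⟩ := St12.sLem hBF hw₁ hw₂ hp Qv.1 Qv.2.1 Qv.2.2
    refine ⟨Quot.mk _ T, ?_⟩
    exact Quot.sound (St12.pronkSymm hBF hT)
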